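/- Let a₁ > a₂ > 0 and let η₀ ⊆ ℤ^d be a union of hypercubes. Let (η_k)_{k ≥ 0} be any sequence of configurations such that, for each k, η_{k+1} is obtained from η_k by a single best-response update at some site x_k ∈ ℤ^d (η_{k+1} agrees with η_k off x_k and x_k ∈ η_{k+1} iff x_k ∈ Φ(η_k)). Then for every k one has η_k ⊆ Φ(η_k) and η_k ⊆ η_{k+1}; in particular the sequence of configurations is nondecreasing. (This is the deterministic core of the fact that the sparse best-response dynamics started from a union of hypercubes can only grow.) -/
import Mathlib


/-- Two sites of `ℤᵈ` are neighbors iff their `ℓ¹`-distance equals `1`. -/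
def Neighbor (d : ℕ) (x y : Fin d → ℤ) : Prop :=
  (∑ i, (x i - y i).natAbs) = 1

/-- Number of neighbors of `x` following strategy 1 (i.e. belonging to `η`). -/
noncomputable def N1 (d : ℕ) (η : Set (Fin d → ℤ)) (x : Fin d → ℤ) : ℕ :=
  Set.ncard {y | Neighbor d x y ∧ y ∈ η}

/-- Number of neighbors of `x` following strategy 2 (i.e. not belonging to `η`). -/
noncomputable def N2 (d : ℕ) (η : Set (Fin d → ℤ)) (x : Fin d → ℤ) : ℕ :=
  Set.ncard {y | Neighbor d x y ∧ y ∉ η}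

/-- The best-response map on configurations. -/
def Phi (d : ℕ) (a₁ a₂ : ℝ) (η : Set (Fin d → ℤ)) : Set (Fin d → ℤ) :=
  {x | a₁ * (N1 d η x : ℝ) > a₂ * (N2 d η x : ℝ) ∨
    (x ∈ η ∧ a₁ * (N1 d η x : ℝ) = a₂ * (N2 d η x : ℝ))}

/-- The hypercube `H_z = 2z + {0,1}^d`. -/
def Hcube (d : ℕ) (z : Fin d → ℤ) : Set (Fin d → ℤ) :=
  {x | ∀ i, x i = 2 * z i ∨ x i = 2 * z i + 1}

/-- A configuration is a union of hypercubes if it is `⋃_{z ∈ S} H_z` for some `S ⊆ ℤᵈ`. -/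
def IsUnionOfHypercubes (d : ℕ) (η : Set (Fin d → ℤ)) : Prop :=
  ∃ S : Set (Fin d → ℤ), η = ⋃ z ∈ S, Hcube d z

lemma neighbor_subset (d : ℕ) (x : Fin d → ℤ) :
    {y : Fin d → ℤ | Neighbor d x y} ⊆
      ↑((Finset.univ : Finset (Fin d × Bool)).image
        (fun p => Function.update x p.1 (x p.1 + if p.2 then 1 else -1))) := by
  intro y hy
  simp only [Neighbor, Set.mem_setOf_eq] at hy
  have hex : ∃ i, (x i - y i).natAbs ≠ 0 := by
    by_contra h
    push_neg at h
    rw [Finset.sum_eq_zero (fun i _ => h i)] at hy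
    exact one_ne_zero hy.symm
  obtain ⟨i, hi⟩ := hex
  have hle : (x i - y i).natAbs ≤ 1 := by
    rw [← hy]
    exact Finset.single_le_sum (f := fun j => (x j - y j).natAbs)
      (fun j _ => Nat.zero_le _) (Finset.mem_univ i)
  have h1 : (x i - y i).natAbs = 1 := by omega
  have hadd : (x i - y i).natAbs + ∑ j ∈ Finset.univ.erase i, (x j - y j).natAbs
      = ∑ j, (x j - y j).natAbs :=
    Finset.add_sum_erase Finset.univ (fun j => (x j - y j).natAbs) (Finset.mem_univ i)
  have h0 : ∑ j ∈ Finset.univ.erase i, (x j - y j).natAbs = 0 := by omega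
  have hrest : ∀ j, j ≠ i → y j = x j := by
    intro j hj
    have := Finset.sum_eq_zero_iff.mp h0 j (Finset.mem_erase.mpr ⟨hj, Finset.mem_univ j⟩)
    have := Int.natAbs_eq_zero.mp this
    omega
  have hcase : x i - y i = 1 ∨ x i - y i = -1 := Int.natAbs_eq_iff.mp h1
  simp only [Finset.coe_image, Finset.coe_univ, Set.image_univ, Set.mem_range]
  refine ⟨(i, if x i - y i = -1 then true else false), ?_⟩
  funext j
  by_cases hji : j = i
  · subst hji
    rcases hcase with h | h <;> simp [Function.update, h] <;> omega
  · simp [Function.update, hji, hrest j hji]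

lemma neighbor_finite (d : ℕ) (x : Fin d → ℤ) :
    {y : Fin d → ℤ | Neighbor d x y}.Finite :=
  Set.Finite.subset (Finset.finite_toSet _) (neighbor_subset d x)

lemma N1set_finite (d : ℕ) (η : Set (Fin d → ℤ)) (x : Fin d → ℤ) :
    {y | Neighbor d x y ∧ y ∈ η}.Finite :=
  (neighbor_finite d x).subset (fun y hy => hy.1)

lemma N2set_finite (d : ℕ) (η : Set (Fin d → ℤ)) (x : Fin d → ℤ) :
    {y | Neighbor d x y ∧ y ∉ η}.Finite :=
  (neighbor_finite d x).subset (fun y hy => hy.1)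

lemma neighbor_ncard_le (d : ℕ) (x : Fin d → ℤ) :
    ({y : Fin d → ℤ | Neighbor d x y}).ncard ≤ 2 * d := by
  have h := Set.ncard_le_ncard (neighbor_subset d x) (Finset.finite_toSet _)
  rw [Set.ncard_coe_finset] at h
  calc ({y : Fin d → ℤ | Neighbor d x y}).ncard
      ≤ _ := h
    _ ≤ (Finset.univ : Finset (Fin d × Bool)).card := Finset.card_image_le
    _ = 2 * d := by simp [Finset.card_univ, mul_comm]

lemma N1_mono (d : ℕ) {η η' : Set (Fin d → ℤ)} (h : η ⊆ η') (x : Fin d → ℤ) :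
    N1 d η x ≤ N1 d η' x :=
  Set.ncard_le_ncard (fun y hy => ⟨hy.1, h hy.2⟩) (N1set_finite d η' x)

lemma N2_anti (d : ℕ) {η η' : Set (Fin d → ℤ)} (h : η ⊆ η') (x : Fin d → ℤ) :
    N2 d η' x ≤ N2 d η x :=
  Set.ncard_le_ncard (fun y hy => ⟨hy.1, fun hm => hy.2 (h hm)⟩) (N2set_finite d η x)

lemma N1_ge_of_hcube (d : ℕ) {z x : Fin d → ℤ} (hx : x ∈ Hcube d z)
    {η : Set (Fin d → ℤ)} (hH : Hcube d z ⊆ η) : d ≤ N1 d η x := by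
  set g : Fin d → (Fin d → ℤ) := fun i => Function.update x i (4 * z i + 1 - x i) with hg
  have hginj : Function.Injective g := by
    intro i i' hii
    by_contra hne
    have h1 : g i i = 4 * z i + 1 - x i := by simp [hg, Function.update]
    have h2 : g i' i = x i := by simp [hg, Function.update, hne]
    have := congrFun hii i
    rw [h1, h2] at this
    rcases hx i with h | h <;> omega
  have hsub : ↑(Finset.univ.image g) ⊆ {y | Neighbor d x y ∧ y ∈ η} := by
    intro y hy
    simp only [Finset.coe_image, Finset.coe_univ, Set.image_univ, Set.mem_range] at hy
    obtain ⟨i, rfl⟩ := hy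
    constructor
    · show (∑ j, (x j - g i j).natAbs) = 1
      rw [Finset.sum_eq_single_of_mem i (Finset.mem_univ i)]
      · have h1 : g i i = 4 * z i + 1 - x i := by simp [hg, Function.update]
        rw [h1]
        rcases hx i with h | h <;> omega
      · intro j _ hji
        have : g i j = x j := Function.update_of_ne hji _ _
        simp [this]
    · apply hH
      intro j
      by_cases hji : j = i
      · subst hji
        have h1 : g j j = 4 * z j + 1 - x j := by simp [hg, Function.update]
        rcases hx j with h | h
        · right; omega
        · left; omega
      · have : g i j = x j := Function.update_of_ne hji _ _
        rw [this]; exact hx j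
  have hcard : (Finset.univ.image g).card = d := by
    rw [Finset.card_image_of_injective _ hginj, Finset.card_univ, Fintype.card_fin]
  calc d = (↑(Finset.univ.image g) : Set (Fin d → ℤ)).ncard := by
        rw [Set.ncard_coe_finset, hcard]
    _ ≤ _ := Set.ncard_le_ncard hsub (N1set_finite d η x)

lemma N1_add_N2 (d : ℕ) (η : Set (Fin d → ℤ)) (x : Fin d → ℤ) :
    N1 d η x + N2 d η x ≤ 2 * d := by
  have hdisj : Disjoint {y | Neighbor d x y ∧ y ∈ η} {y | Neighbor d x y ∧ y ∉ η} :=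
    Set.disjoint_left.mpr (fun y h1 h2 => h2.2 h1.2)
  have hunion : {y | Neighbor d x y ∧ y ∈ η} ∪ {y | Neighbor d x y ∧ y ∉ η}
      = {y : Fin d → ℤ | Neighbor d x y} := by
    ext y
    by_cases hy : y ∈ η <;> simp [hy]
  have := Set.ncard_union_eq hdisj (N1set_finite d η x) (N2set_finite d η x)
  rw [hunion] at this
  have := neighbor_ncard_le d x
  unfold N1 N2
  omega

lemma phi_of_le {d : ℕ} {a₁ a₂ : ℝ} (ha : a₁ > a₂) (ha₂ : 0 < a₂)
    {η η' : Set (Fin d → ℤ)} (hsub : η ⊆ η') {x : Fin d → ℤ} (hx : x ∈ η')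
    (hineq : a₂ * (N2 d η x : ℝ) ≤ a₁ * (N1 d η x : ℝ)) : x ∈ Phi d a₁ a₂ η' := by
  have ha₁ : (0:ℝ) < a₁ := lt_trans ha₂ ha
  have h1 : a₁ * (N1 d η x : ℝ) ≤ a₁ * (N1 d η' x : ℝ) :=
    mul_le_mul_of_nonneg_left (Nat.cast_le.mpr (N1_mono d hsub x)) ha₁.le
  have h2 : a₂ * (N2 d η' x : ℝ) ≤ a₂ * (N2 d η x : ℝ) :=
    mul_le_mul_of_nonneg_left (Nat.cast_le.mpr (N2_anti d hsub x)) ha₂.le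
  have h : a₂ * (N2 d η' x : ℝ) ≤ a₁ * (N1 d η' x : ℝ) :=
    le_trans h2 (le_trans hineq h1)
  rcases lt_or_eq_of_le h with h | h
  · exact Or.inl h
  · exact Or.inr ⟨hx, h.symm⟩

lemma le_of_phi {d : ℕ} {a₁ a₂ : ℝ} {η : Set (Fin d → ℤ)} {x : Fin d → ℤ}
    (hx : x ∈ Phi d a₁ a₂ η) : a₂ * (N2 d η x : ℝ) ≤ a₁ * (N1 d η x : ℝ) := by
  rcases hx with h | ⟨_, h⟩
  · exact le_of_lt h
  · exact le_of_eq h.symm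

lemma hcube_subset_phi {d : ℕ} (hd : 1 ≤ d) {a₁ a₂ : ℝ} (ha : a₁ > a₂) (ha₂ : 0 < a₂)
    {η : Set (Fin d → ℤ)} (h0 : IsUnionOfHypercubes d η) : η ⊆ Phi d a₁ a₂ η := by
  obtain ⟨S, rfl⟩ := h0
  intro x hx
  simp only [Set.mem_iUnion] at hx
  obtain ⟨z, hz, hxz⟩ := hx
  have hH : Hcube d z ⊆ ⋃ z ∈ S, Hcube d z := Set.subset_biUnion_of_mem hz
  have hN1 : d ≤ N1 d (⋃ z ∈ S, Hcube d z) x := N1_ge_of_hcube d hxz hH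
  have hN2 : N2 d (⋃ z ∈ S, Hcube d z) x ≤ d := by
    have := N1_add_N2 d (⋃ z ∈ S, Hcube d z) x
    omega
  have ha₁ : (0:ℝ) < a₁ := lt_trans ha₂ ha
  left
  calc a₂ * (N2 d (⋃ z ∈ S, Hcube d z) x : ℝ)
      ≤ a₂ * (d : ℝ) := mul_le_mul_of_nonneg_left (Nat.cast_le.mpr hN2) ha₂.le
    _ < a₁ * (d : ℝ) := by
        apply mul_lt_mul_of_pos_right ha
        exact_mod_cast Nat.lt_of_lt_of_le Nat.zero_lt_one hd
    _ ≤ a₁ * (N1 d (⋃ z ∈ S, Hcube d z) x : ℝ) :=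
        mul_le_mul_of_nonneg_left (Nat.cast_le.mpr hN1) ha₁.le

/-- Starting from a union of hypercubes, any sequence of single best-response updates
(with `a₁ > a₂ > 0`) produces a nondecreasing sequence of configurations, each contained
in its image under `Φ`. -/
theorem update_sequence_nondecreasing (d : ℕ) (hd : 1 ≤ d) (a₁ a₂ : ℝ)
    (ha : a₁ > a₂) (ha₂ : 0 < a₂)
    (η : ℕ → Set (Fin d → ℤ)) (h0 : IsUnionOfHypercubes d (η 0))
    (x : ℕ → Fin d → ℤ)
    (hoff : ∀ k, ∀ y : Fin d → ℤ, y ≠ x k → (y ∈ η (k + 1) ↔ y ∈ η k))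
    (hat : ∀ k, x k ∈ η (k + 1) ↔ x k ∈ Phi d a₁ a₂ (η k)) :
    ∀ k, η k ⊆ Phi d a₁ a₂ (η k) ∧ η k ⊆ η (k + 1) := by
  have key : ∀ k, η k ⊆ Phi d a₁ a₂ (η k) := by
    intro k
    induction k with
    | zero => exact hcube_subset_phi hd ha ha₂ h0
    | succ k ih =>
      have hsub : η k ⊆ η (k + 1) := by
        intro y hy
        by_cases hyx : y = x k
        · subst hyx; exact (hat k).mpr (ih hy)
        · exact (hoff k y hyx).mpr hy
      intro y hy
      have hPhiK : y ∈ Phi d a₁ a₂ (η k) := by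
        by_cases hyx : y = x k
        · subst hyx; exact (hat k).mp hy
        · exact ih ((hoff k y hyx).mp hy)
      exact phi_of_le ha ha₂ hsub hy (le_of_phi hPhiK)
  intro k
  refine ⟨key k, ?_⟩
  intro y hy
  by_cases hyx : y = x k
  · subst hyx; exact (hat k).mpr (key k hy)
  · exact (hoff k y hyx).mpr hy
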